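/- Let E be a directed graph, let K ⊆ E⁰ be saturated and hereditary, and let v, w ∈ E⁰. If {x ∈ E⁰ : v ≥ x} ∩ {x ∈ E⁰ : w ≥ x} ⊆ K, then ΣH(v) ∩ ΣH(w) ⊆ K. -/

import Mathlib

/-- A (countable) directed graph `E = (E⁰, E¹, r, s)`:
a set of vertices, a set of edges, and range and source maps. -/
structure Digraph' where
  V : Type
  E : Type
  src : E → V
  rng : E → V

namespace Digraph'

variable (G : Digraph')

/-- `v ≥ w`: there is a path (possibly of length zero) from `v` to `w`. -/
def Reach (v w : G.V) : Prop :=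
  Relation.ReflTransGen (fun a b : G.V => ∃ e : G.E, G.src e = a ∧ G.rng e = b) v w

/-- A set `H` of vertices is hereditary if `v ∈ H` and `v ≥ w` imply `w ∈ H`. -/
def Hereditary (H : Set G.V) : Prop :=
  ∀ ⦃v w : G.V⦄, v ∈ H → G.Reach v w → w ∈ H

/-- A set `X` of vertices is saturated if every vertex `v` with `0 < |s⁻¹(v)| < ∞`
all of whose emitted edges have range in `X` itself belongs to `X`. -/
def Saturated (X : Set G.V) : Prop :=
  ∀ v : G.V, (G.src ⁻¹' {v}).Finite → (G.src ⁻¹' {v}).Nonempty →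
    (∀ e : G.E, G.src e = v → G.rng e ∈ X) → v ∈ X

/-- The saturation `Σ(X)`: the smallest saturated set containing `X`. -/
def saturation (X : Set G.V) : Set G.V :=
  ⋂₀ {Y : Set G.V | G.Saturated Y ∧ X ⊆ Y}

/-- `ΣH(X)`: the smallest saturated hereditary set containing `X`. -/
def satHered (X : Set G.V) : Set G.V :=
  ⋂₀ {Y : Set G.V | G.Saturated Y ∧ G.Hereditary Y ∧ X ⊆ Y}

end Digraph'

/-- Inductive version of saturation. -/
inductive Sat (G : Digraph') (X : Set G.V) : G.V → Prop
  | base {x : G.V} : x ∈ X → Sat G X x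
  | step {v : G.V} : (G.src ⁻¹' {v}).Finite → (G.src ⁻¹' {v}).Nonempty →
      (∀ e : G.E, G.src e = v → Sat G X (G.rng e)) → Sat G X v

lemma sat_saturated (G : Digraph') (X : Set G.V) : G.Saturated {x | Sat G X x} :=
  fun _ hf hn he => Sat.step hf hn he

lemma sat_subset {G : Digraph'} {X K : Set G.V} (hXK : X ⊆ K) (hK : G.Saturated K) :
    ∀ {x : G.V}, Sat G X x → x ∈ K := by
  intro x hx
  induction hx with
  | base h => exact hXK h
  | step hf hn _ ih => exact hK _ hf hn ih

lemma sat_hereditary {G : Digraph'} {X : Set G.V} (hX : G.Hereditary X) :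
    G.Hereditary {x | Sat G X x} := by
  intro x y hx hxy
  induction hx generalizing y with
  | base h => exact Sat.base (hX h hxy)
  | step hf hn he ih =>
    rcases hxy.cases_head with rfl | ⟨z, ⟨e, hes, her⟩, hzy⟩
    · exact Sat.step hf hn he
    · exact ih e hes (her ▸ hzy)

lemma sat_inter {G : Digraph'} {H₁ H₂ : Set G.V} (h₁ : G.Hereditary H₁)
    (h₂ : G.Hereditary H₂) :
    ∀ {x : G.V}, Sat G H₁ x → Sat G H₂ x → Sat G (H₁ ∩ H₂) x := by
  intro x hx1
  induction hx1 with
  | @base x hx =>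
    intro hx2
    induction hx2 with
    | base h => exact Sat.base ⟨hx, h⟩
    | @step u hf hn he ih =>
      refine Sat.step hf hn fun e hes => ih e hes ?_
      exact h₁ hx (Relation.ReflTransGen.single ⟨e, hes, rfl⟩)
  | @step u hf hn he ih =>
    intro hx2
    refine Sat.step hf hn fun e hes => ih e hes ?_
    exact sat_hereditary h₂ hx2 (Relation.ReflTransGen.single ⟨e, hes, rfl⟩)

lemma reach_hereditary (G : Digraph') (v : G.V) :
    G.Hereditary {x | G.Reach v x} :=
  fun _ _ hx hxy => hx.trans hxy

lemma satHered_subset_sat (G : Digraph') (v : G.V) :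
    G.satHered {v} ⊆ {x | Sat G {x | G.Reach v x} x} := by
  intro x hx
  exact hx _ ⟨sat_saturated G _, sat_hereditary (reach_hereditary G v),
    Set.singleton_subset_iff.mpr (Sat.base Relation.ReflTransGen.refl)⟩

/-- If `K` is saturated and hereditary and the common successors of `v`
and `w` all lie in `K`, then `ΣH(v) ∩ ΣH(w) ⊆ K`. -/
theorem stmt_8 (G : Digraph') [Countable G.V] [Countable G.E] (K : Set G.V)
    (hKsat : G.Saturated K) (hKher : G.Hereditary K) (v w : G.V)
    (h : {x : G.V | G.Reach v x} ∩ {x : G.V | G.Reach w x} ⊆ K) :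
    G.satHered {v} ∩ G.satHered {w} ⊆ K := by
  intro x ⟨hxv, hxw⟩
  have h1 := satHered_subset_sat G v hxv
  have h2 := satHered_subset_sat G w hxw
  exact sat_subset h hKsat (sat_inter (reach_hereditary G v) (reach_hereditary G w) h1 h2)
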